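/- arXiv:2405.06430 — 6 statements merged into one kernel-verified Lean document; each statement's English description precedes it below -/
import Mathlib

section
/- Let (a_1, ..., a_n) be a palindromic sequence of positive integers with convergent numerators/denominators A_h, B_h (so A_{n-1} = B_n), and let s be a positive integer. Let α be the purely periodic continued fraction α = [0; overline{a_1, ..., a_n, s}], which satisfies A_n α² + s A_n α - (s B_n + B_{n-1}) = 0. Then α is an algebraic integer (i.e., a root of a monic polynomial with integer coefficients) if and only if (-1)^n s ≡ A_{n-1} B_{n-1} (mod A_n). -/
open Matrix Polynomial

private def Mm (x : ℤ) : Matrix (Fin 2) (Fin 2) ℤ := !![x, 1; 1, 0]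

private lemma Mm_transpose (x : ℤ) : (Mm x)ᵀ = Mm x := by
  unfold Mm
  ext i j
  fin_cases i <;> fin_cases j <;> rfl

private lemma conv_prod (n : ℕ) (a A B : ℕ → ℤ)
    (hA0 : A 0 = 1) (hA1 : A 1 = a 1) (hB0 : B 0 = 0) (hB1 : B 1 = 1)
    (hArec : ∀ h, 2 ≤ h → h ≤ n → A h = a h * A (h - 1) + A (h - 2))
    (hBrec : ∀ h, 2 ≤ h → h ≤ n → B h = a h * B (h - 1) + B (h - 2)) :
    ∀ h, 1 ≤ h → h ≤ n →
      !![A h, A (h-1); B h, B (h-1)] =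
        ((List.range h).map (fun i => Mm (a (i+1)))).prod := by
  intro h
  induction h with
  | zero => omega
  | succ k ih =>
    intro _ hle
    rcases Nat.eq_zero_or_pos k with hk0 | hk1
    · subst hk0
      rw [show List.range 1 = [0] from rfl]
      simp [Mm, hA0, hA1, hB0, hB1]
    · have hkn : k ≤ n := by omega
      have ihk := ih hk1 hkn
      rw [List.range_succ, List.map_append, List.prod_append]
      simp only [List.map_cons, List.map_nil, List.prod_cons, List.prod_nil, mul_one]
      rw [← ihk]
      have h1 : k + 1 - 1 = k := rfl
      have h2 : k + 1 - 2 = k - 1 := rfl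
      rw [hArec (k+1) (by omega) hle, hBrec (k+1) (by omega) hle, h1, h2]
      unfold Mm
      rw [Matrix.mul_fin_two]
      congr 1 <;> ring

private lemma det_identity (n : ℕ) (a A B : ℕ → ℤ)
    (hA0 : A 0 = 1) (hA1 : A 1 = a 1) (hB0 : B 0 = 0) (hB1 : B 1 = 1)
    (hArec : ∀ h, 2 ≤ h → h ≤ n → A h = a h * A (h - 1) + A (h - 2))
    (hBrec : ∀ h, 2 ≤ h → h ≤ n → B h = a h * B (h - 1) + B (h - 2)) :
    ∀ h, 1 ≤ h → h ≤ n → A h * B (h-1) - B h * A (h-1) = (-1)^h := by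
  intro h
  induction h with
  | zero => omega
  | succ k ih =>
    intro _ hle
    rcases Nat.eq_zero_or_pos k with hk0 | hk1
    · subst hk0
      simp [hA0, hA1, hB0, hB1]
    · have hkn : k ≤ n := by omega
      have ihk := ih hk1 hkn
      have h1 : k + 1 - 1 = k := rfl
      have h2 : k + 1 - 2 = k - 1 := rfl
      rw [hArec (k+1) (by omega) hle, hBrec (k+1) (by omega) hle, h1, h2]
      have hpow : (-1 : ℤ)^(k+1) = -(-1)^k := by ring
      rw [hpow, ← ihk]
      ring

/-- The purely periodic continued fraction `α = [0; \overline{a_1,…,a_n,s}]`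
(with palindromic period), which is the positive root of
`A_n x² + s A_n x - (s B_n + B_{n-1})`, is an algebraic integer iff
`(-1)^n s ≡ A_{n-1} B_{n-1} (mod A_n)`. -/
theorem palindromic_cf_algebraic_integer_iff (n : ℕ) (hn : 1 ≤ n)
    (a A B : ℕ → ℤ) (s : ℤ) (hs : 0 < s) (α : ℝ)
    (hapos : ∀ i, 1 ≤ i → i ≤ n → 0 < a i)
    (hpal : ∀ i, 1 ≤ i → i ≤ n → a i = a (n + 1 - i))
    (hA0 : A 0 = 1) (hA1 : A 1 = a 1) (hB0 : B 0 = 0) (hB1 : B 1 = 1)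
    (hArec : ∀ h, 2 ≤ h → h ≤ n → A h = a h * A (h - 1) + A (h - 2))
    (hBrec : ∀ h, 2 ≤ h → h ≤ n → B h = a h * B (h - 1) + B (h - 2))
    (hαpos : 0 < α)
    (hαroot : (A n : ℝ) * α ^ 2 + (s : ℝ) * (A n : ℝ) * α -
      ((s : ℝ) * (B n : ℝ) + (B (n - 1) : ℝ)) = 0) :
    IsIntegral ℤ α ↔ (-1) ^ n * s ≡ A (n - 1) * B (n - 1) [ZMOD A n] := by
  -- A n ≥ 1
  have hApos : ∀ h, h ≤ n → 1 ≤ A h := by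
    intro h
    induction h using Nat.strong_induction_on with
    | _ h ih =>
      intro hhn
      match h with
      | 0 => simp [hA0]
      | 1 => rw [hA1]; exact hapos 1 le_rfl hhn
      | (k+2) =>
        rw [hArec (k+2) (by omega) hhn]
        have h1 : 1 ≤ A (k+2-1) := ih (k+1) (by omega) (by omega)
        have h2 : 1 ≤ A (k+2-2) := ih k (by omega) (by omega)
        have h3 : 1 ≤ a (k+2) := hapos (k+2) (by omega) hhn
        nlinarith
  have hAn : (1 : ℤ) ≤ A n := hApos n le_rfl
  -- palindrome: B n = A (n-1)
  have hBA : B n = A (n - 1) := by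
    have hP := conv_prod n a A B hA0 hA1 hB0 hB1 hArec hBrec n hn le_rfl
    set L := (List.range n).map (fun i => Mm (a (i+1))) with hL
    have hLlen : L.length = n := by simp [hL]
    have hrev : L.reverse = L := by
      apply List.ext_getElem (by simp)
      intro i h1 h2
      have hi : i < n := by omega
      rw [List.getElem_reverse]
      simp only [hL, List.getElem_map, List.getElem_range, List.length_map, List.length_range]
      have hip := hpal (i+1) (by omega) (by omega)
      have he : n + 1 - (i + 1) = n - 1 - i + 1 := by omega
      rw [he] at hip
      first | exact congrArg Mm hip.symm | exact congrArg Mm hip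
    have htr : (!![A n, A (n-1); B n, B (n-1)])ᵀ = !![A n, A (n-1); B n, B (n-1)] := by
      rw [hP, Matrix.transpose_list_prod]
      have hmt : L.map Matrix.transpose = L := by
        simp only [hL, List.map_map]
        congr 1
        funext i
        exact Mm_transpose _
      rw [hmt, hrev, ← hP]
    have h10 := congrFun (congrFun htr 1) 0
    simp at h10
    omega
  -- determinant
  have hdet : A n * B (n-1) - B n * A (n-1) = (-1)^n :=
    det_identity n a A B hA0 hA1 hB0 hB1 hArec hBrec n hn le_rfl
  have hdet' : A n * B (n-1) - A (n-1) * A (n-1) = (-1)^n := by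
    rw [← hdet, hBA]
  have hsq : ((-1:ℤ)^n) * ((-1:ℤ)^n) = 1 := by
    rcases Nat.even_or_odd n with he | ho
    · rw [he.neg_one_pow]; ring
    · rw [ho.neg_one_pow]; ring
  -- the key divisibility equivalence
  have hkey : A n ∣ (s * B n + B (n-1)) ↔
      (-1) ^ n * s ≡ A (n - 1) * B (n - 1) [ZMOD A n] := by
    rw [Int.modEq_iff_dvd, hBA]
    constructor
    · intro hX
      have hY : A (n-1) * B (n-1) - (-1)^n * s =
          A (n-1) * (s * A (n-1) + B (n-1)) - A n * (s * B (n-1)) := by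
        linear_combination s * hdet'
      rw [hY]
      exact dvd_sub (hX.mul_left _) (dvd_mul_right _ _)
    · intro hY
      have h1 : (-1)^n * (s * A (n-1) + B (n-1)) =
          A n * (B (n-1) * B (n-1)) -
            A (n-1) * (A (n-1) * B (n-1) - (-1)^n * s) := by
        linear_combination (-(B (n-1))) * hdet'
      have h2 : A n ∣ (-1)^n * (s * A (n-1) + B (n-1)) := by
        rw [h1]
        exact dvd_sub (dvd_mul_right _ _) (hY.mul_left _)
      have h3 : s * A (n-1) + B (n-1) = (-1)^n * ((-1)^n * (s * A (n-1) + B (n-1))) := by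
        rw [← mul_assoc, hsq, one_mul]
      rw [h3]
      exact h2.mul_left _
  rw [← hkey]
  have hAnR : (A n : ℝ) ≠ 0 := Int.cast_ne_zero.mpr (by omega)
  constructor
  · -- integral → divisibility
    intro hint
    have hsI : IsIntegral ℤ ((s : ℝ)) := by
      have h := isIntegral_algebraMap (R := ℤ) (A := ℝ) (x := s)
      simpa using h
    have hint2 : IsIntegral ℤ (α * α + (s : ℝ) * α) := (hint.mul hint).add (hsI.mul hint)
    have hval : α * α + (s : ℝ) * α = ((s * B n + B (n-1) : ℤ) : ℝ) / ((A n : ℤ) : ℝ) := by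
      rw [eq_div_iff hAnR]
      push_cast
      linear_combination hαroot
    set q : ℚ := ((s * B n + B (n-1) : ℤ) : ℚ) / ((A n : ℤ) : ℚ) with hq
    have hmapq : algebraMap ℚ ℝ q = α * α + (s : ℝ) * α := by
      rw [hval, eq_ratCast (algebraMap ℚ ℝ) q, hq]
      push_cast
      ring
    have hqint : IsIntegral ℤ q := by
      have hinj : Function.Injective (algebraMap ℚ ℝ) := (algebraMap ℚ ℝ).injective
      refine (isIntegral_algHom_iff ((algebraMap ℚ ℝ).toIntAlgHom) hinj).mp ?_
      rw [show ((algebraMap ℚ ℝ).toIntAlgHom q) = algebraMap ℚ ℝ q from rfl, hmapq]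
      exact hint2
    obtain ⟨m, hm⟩ := IsIntegrallyClosed.isIntegral_iff.mp hqint
    refine ⟨m, ?_⟩
    have hAnQ : ((A n : ℤ) : ℚ) ≠ 0 := Int.cast_ne_zero.mpr (by omega)
    have hmq : (m : ℚ) = q := by rw [← hm]; simp
    have : ((s * B n + B (n-1) : ℤ) : ℚ) = ((A n : ℤ) : ℚ) * (m : ℚ) := by
      rw [hmq, hq]
      field_simp
    exact_mod_cast this
  · -- divisibility → integral
    rintro ⟨k, hk⟩
    have hc : ((s : ℝ) * (B n : ℝ) + (B (n-1) : ℝ)) = (A n : ℝ) * (k : ℝ) := by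
      exact_mod_cast congrArg (fun z : ℤ => (z : ℝ)) hk
    have hroot2 : α^2 + (s:ℝ)*α - (k:ℝ) = 0 := by
      have h0 : (A n : ℝ) * (α^2 + (s:ℝ)*α - (k:ℝ)) = 0 := by
        linear_combination hαroot + hc
      rcases mul_eq_zero.mp h0 with h | h
      · exact absurd h hAnR
      · exact h
    refine ⟨X^2 + C s * X - C k, ?_, ?_⟩
    · monicity!
    · simp only [eval₂_sub, eval₂_add, eval₂_pow, eval₂_X, eval₂_mul, eval₂_C]
      rw [eq_intCast, eq_intCast]
      linear_combination hroot2
end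

section
/- Fix a positive integer m and n ≥ 1. Let α = [0; overline{m, m, ..., m, s}] be the purely periodic continued fraction whose period consists of n copies of m followed by s. If s = (-1)^n f_n(m) f_{n-1}(m) + k f_{n+1}(m) for an integer k with s > 0, then α is an algebraic integer with minimal polynomial x² + s x + t where t = (-1)^{n-1} f_{n-1}(m)² - k f_n(m). -/
open Polynomial

private lemma fib_pos (m : ℤ) (hm : 0 < m) (f : ℕ → ℤ) (hf0 : f 0 = 0) (hf1 : f 1 = 1)
    (hfrec : ∀ h, f (h + 2) = m * f (h + 1) + f h) : ∀ j, 0 < f (j + 1) ∧ 0 ≤ f j := by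
  intro j
  induction j with
  | zero => simp [hf0, hf1]
  | succ i ih =>
    refine ⟨?_, le_of_lt ih.1⟩
    rw [hfrec]
    nlinarith [ih.1, ih.2]

private lemma fib_cassini (m : ℤ) (f : ℕ → ℤ) (hf0 : f 0 = 0) (hf1 : f 1 = 1)
    (hfrec : ∀ h, f (h + 2) = m * f (h + 1) + f h) :
    ∀ j, f (j + 2) * f j - f (j + 1) ^ 2 = (-1) ^ (j + 1) := by
  intro j
  induction j with
  | zero => simp [hf0, hf1]
  | succ i ih =>
    have h1 := hfrec i
    have h2 := hfrec (i + 1)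
    rw [h2]
    have : (-1 : ℤ) ^ (i + 1 + 1) = -(-1) ^ (i + 1) := by ring
    rw [this, ← ih, h1]
    ring

/-- For `α = [0; \overline{m,…,m,s}]` (period: n copies of m then s), if
`s = (-1)^n f_n f_{n-1} + k f_{n+1} > 0` then `α` is an algebraic integer with
minimal polynomial `x² + s x + t`, `t = (-1)^{n-1} f_{n-1}² - k f_n`. -/
theorem constant_period_algebraic_integer (m : ℤ) (hm : 0 < m) (n : ℕ) (hn : 1 ≤ n)
    (f : ℕ → ℤ) (hf0 : f 0 = 0) (hf1 : f 1 = 1)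
    (hfrec : ∀ h, f (h + 2) = m * f (h + 1) + f h)
    (k s t : ℤ)
    (hs : s = (-1) ^ n * f n * f (n - 1) + k * f (n + 1)) (hspos : 0 < s)
    (ht : t = (-1) ^ (n - 1) * f (n - 1) ^ 2 - k * f n)
    (α : ℝ) (hα0 : 0 < α) (hα1 : α < 1) (hirr : Irrational α)
    (hαroot : (f (n + 1) : ℝ) * α ^ 2 + (s : ℝ) * (f (n + 1) : ℝ) * α -
      ((s : ℝ) * (f n : ℝ) + (f (n - 1) : ℝ)) = 0) :
    IsIntegral ℤ α ∧ minpoly ℤ α = X ^ 2 + C s * X + C t := by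
  obtain ⟨j, rfl⟩ : ∃ j, n = j + 1 := ⟨n - 1, (Nat.succ_pred_eq_of_pos hn).symm⟩
  simp only [Nat.add_sub_cancel] at hs ht hαroot
  have hI : f (j + 1 + 1) * f j - f (j + 1) ^ 2 = (-1) ^ (j + 1) :=
    fib_cassini m f hf0 hf1 hfrec j
  have hE : s * f (j + 1) + f j = -t * f (j + 1 + 1) := by
    rw [hs, ht]
    rcases Nat.even_or_odd j with hj | hj
    · simp only [hj.neg_one_pow, (hj.add_one).neg_one_pow] at hI ⊢
      linear_combination (f j) * hI
    · simp only [hj.neg_one_pow, (hj.add_one).neg_one_pow] at hI ⊢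
      linear_combination (-f j) * hI
  have hF : (0 : ℤ) < f (j + 1 + 1) := (fib_pos m hm f hf0 hf1 hfrec (j + 1)).1
  have hFne : (f (j + 1 + 1) : ℝ) ≠ 0 := by exact_mod_cast hF.ne'
  have hE' : (s : ℝ) * (f (j + 1) : ℝ) + (f j : ℝ) = -(t : ℝ) * (f (j + 1 + 1) : ℝ) := by
    exact_mod_cast hE
  have hroot : α ^ 2 + (s : ℝ) * α + (t : ℝ) = 0 := by
    have h : (f (j + 1 + 1) : ℝ) * (α ^ 2 + (s : ℝ) * α + (t : ℝ)) = 0 := by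
      linear_combination hαroot + hE'
    exact (mul_eq_zero.mp h).resolve_left hFne
  set p : ℤ[X] := X ^ 2 + C s * X + C t with hp
  have hpm : p.Monic := by
    unfold p
    monicity!
  have hpa : (aeval α) p = 0 := by
    rw [hp]
    simp only [map_add, map_mul, map_pow, aeval_X, aeval_C, algebraMap_int_eq, eq_intCast, map_intCast]
    linear_combination hroot
  have hint : IsIntegral ℤ α := ⟨p, hpm, by rw [aeval_def] at hpa; exact hpa⟩
  refine ⟨hint, ?_⟩
  have hdvd : minpoly ℤ α ∣ p := minpoly.isIntegrallyClosed_dvd hint hpa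
  obtain ⟨q, hq⟩ := hdvd
  have hpdeg : p.natDegree = 2 := by
    unfold p
    compute_degree!
  have hqm : q.Monic := (minpoly.monic hint).of_mul_monic_left (hq ▸ hpm)
  have hmd : (minpoly ℤ α).natDegree + q.natDegree = 2 := by
    rw [← Polynomial.natDegree_mul (minpoly.ne_zero hint) hqm.ne_zero, ← hq, hpdeg]
  have hd1 : (minpoly ℤ α).natDegree ≠ 1 := by
    intro h
    have hxc := (minpoly.monic hint).eq_X_add_C h
    have h0 := minpoly.aeval ℤ α
    rw [hxc] at h0
    simp only [map_add, aeval_X, aeval_C, algebraMap_int_eq, eq_intCast, map_intCast] at h0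
    exact hirr.ne_int (-(minpoly ℤ α).coeff 0) (by push_cast; linarith)
  have hd0 : 0 < (minpoly ℤ α).natDegree := minpoly.natDegree_pos hint
  have hq0 : q.natDegree = 0 := by omega
  have hq1 : q = 1 := hqm.natDegree_eq_zero.mp hq0
  rw [hq, hq1, mul_one]
end

section
/- Let M = ((2,0),(0,1)), N = ((1,0),(0,2)), P = ((2,0),(1,1)), Q = ((1,1),(0,2)), R = ((1,1),(0,1)), L = ((1,0),(1,1)). For every even positive integer e: P R^e = R L R^{(e-2)/2} Q, Q L^e = L R L^{(e-2)/2} P, N R^e = R^{e/2} N, and M L^e = L^{e/2} M. -/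
open Matrix

lemma R_pow (n : ℕ) : (!![1, 1; 0, 1] : Matrix (Fin 2) (Fin 2) ℤ) ^ n = !![1, (n : ℤ); 0, 1] := by
  induction n with
  | zero => simp [Matrix.one_fin_two]
  | succ k ih =>
      rw [pow_succ, ih]
      simp [Matrix.mul_fin_two]
      try ring

lemma L_pow (n : ℕ) : (!![1, 0; 1, 1] : Matrix (Fin 2) (Fin 2) ℤ) ^ n = !![1, 0; (n : ℤ), 1] := by
  induction n with
  | zero => simp [Matrix.one_fin_two]
  | succ k ih =>
      rw [pow_succ, ih]
      simp [Matrix.mul_fin_two]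
      try ring

/-- Raney transducer rules for `e` even:
`P R^e = R L R^{(e-2)/2} Q`, `Q L^e = L R L^{(e-2)/2} P`,
`N R^e = R^{e/2} N`, `M L^e = L^{e/2} M`. -/
theorem raney_even (e : ℕ) (he : 1 ≤ e) (heven : Even e) :
    ((!![2, 0; 1, 1] : Matrix (Fin 2) (Fin 2) ℤ) * !![1, 1; 0, 1] ^ e =
      !![1, 1; 0, 1] * !![1, 0; 1, 1] * !![1, 1; 0, 1] ^ ((e - 2) / 2) * !![1, 1; 0, 2]) ∧
    ((!![1, 1; 0, 2] : Matrix (Fin 2) (Fin 2) ℤ) * !![1, 0; 1, 1] ^ e =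
      !![1, 0; 1, 1] * !![1, 1; 0, 1] * !![1, 0; 1, 1] ^ ((e - 2) / 2) * !![2, 0; 1, 1]) ∧
    ((!![1, 0; 0, 2] : Matrix (Fin 2) (Fin 2) ℤ) * !![1, 1; 0, 1] ^ e =
      !![1, 1; 0, 1] ^ (e / 2) * !![1, 0; 0, 2]) ∧
    ((!![2, 0; 0, 1] : Matrix (Fin 2) (Fin 2) ℤ) * !![1, 0; 1, 1] ^ e =
      !![1, 0; 1, 1] ^ (e / 2) * !![2, 0; 0, 1]) := by
  obtain ⟨k, rfl⟩ := heven
  have hk : 1 ≤ k := by omega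
  obtain ⟨m, rfl⟩ := Nat.exists_eq_add_of_le hk
  have h1 : (1 + m + (1 + m) - 2) / 2 = m := by omega
  have h2 : (1 + m + (1 + m)) / 2 = 1 + m := by omega
  rw [h1, h2]
  simp only [R_pow, L_pow]
  refine ⟨?_, ?_, ?_, ?_⟩ <;>
    · simp only [Matrix.mul_fin_two]
      ext i j
      fin_cases i <;> fin_cases j <;> simp <;> push_cast <;> ring
end

section
/- Let M = ((2,0),(0,1)), N = ((1,0),(0,2)), P = ((2,0),(1,1)), Q = ((1,1),(0,2)), R = ((1,1),(0,1)), L = ((1,0),(1,1)). For every odd positive integer e: P R^e = R L R^{(e-1)/2} N, Q L^e = L R L^{(e-1)/2} M, N R^e = R^{(e-1)/2} Q, and M L^e = L^{(e-1)/2} P. -/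
open Matrix

/-- Raney transducer rules for `e` odd:
`P R^e = R L R^{(e-1)/2} N`, `Q L^e = L R L^{(e-1)/2} M`,
`N R^e = R^{(e-1)/2} Q`, `M L^e = L^{(e-1)/2} P`. -/
theorem raney_odd (e : ℕ) (he : 1 ≤ e) (hodd : Odd e) :
    ((!![2, 0; 1, 1] : Matrix (Fin 2) (Fin 2) ℤ) * !![1, 1; 0, 1] ^ e =
      !![1, 1; 0, 1] * !![1, 0; 1, 1] * !![1, 1; 0, 1] ^ ((e - 1) / 2) * !![1, 0; 0, 2]) ∧
    ((!![1, 1; 0, 2] : Matrix (Fin 2) (Fin 2) ℤ) * !![1, 0; 1, 1] ^ e =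
      !![1, 0; 1, 1] * !![1, 1; 0, 1] * !![1, 0; 1, 1] ^ ((e - 1) / 2) * !![2, 0; 0, 1]) ∧
    ((!![1, 0; 0, 2] : Matrix (Fin 2) (Fin 2) ℤ) * !![1, 1; 0, 1] ^ e =
      !![1, 1; 0, 1] ^ ((e - 1) / 2) * !![1, 1; 0, 2]) ∧
    ((!![2, 0; 0, 1] : Matrix (Fin 2) (Fin 2) ℤ) * !![1, 0; 1, 1] ^ e =
      !![1, 0; 1, 1] ^ ((e - 1) / 2) * !![2, 0; 1, 1]) := by
  obtain ⟨k, hk⟩ := hodd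
  subst hk
  have h : (2 * k + 1 - 1) / 2 = k := by omega
  rw [h, R_pow, R_pow, L_pow, L_pow]
  refine ⟨?_, ?_, ?_, ?_⟩ <;>
    · ext i j
      fin_cases i <;> fin_cases j <;>
        simp [Matrix.mul_apply, Fin.sum_univ_two] <;> push_cast <;> ring
end

section
/- Fix integers m ≥ 2, n ≥ 1, and k ≥ (-1)^{n-1} f_{n-2}(m) + 1. Let s = (-1)^n f_n(m) f_{n-1}(m) + k f_{n+1}(m) and t = (-1)^{n-1} f_{n-1}(m)² - k f_n(m), and let α = (√(s² - 4t) - s)/2. Then 0 < 2α < 1, i.e., 2s + 4t + 1 > 0. -/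
private lemma fib_facts (m : ℤ) (hm : 2 ≤ m) (f : ℤ → ℤ)
    (hf0 : f 0 = 0) (hf1 : f 1 = 1)
    (hrec : ∀ h : ℤ, f (h + 2) = m * f (h + 1) + f h) :
    ∀ j : ℕ, 0 ≤ f ((j : ℤ) - 1) ∧ 0 ≤ f j ∧ 1 ≤ f ((j : ℤ) + 1) ∧
      f ((j : ℤ) - 1) * f ((j : ℤ) + 1) - f j ^ 2 = (-1) ^ j := by
  have hfm1 : f (-1) = 1 := by
    have h := hrec (-1)
    norm_num [hf0, hf1] at h
    omega
  intro j
  induction j with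
  | zero =>
    norm_num [hf0, hf1, hfm1]
  | succ j ih =>
    obtain ⟨h1, h2, h3, h4⟩ := ih
    have e1 : f ((j : ℤ) + 1) = m * f j + f ((j : ℤ) - 1) := by
      have := hrec ((j : ℤ) - 1)
      have e : (j : ℤ) - 1 + 2 = (j : ℤ) + 1 := by ring
      have e' : (j : ℤ) - 1 + 1 = (j : ℤ) := by ring
      rwa [e, e'] at this
    have e2 : f ((j : ℤ) + 2) = m * f ((j : ℤ) + 1) + f j := hrec j
    have c1 : ((j + 1 : ℕ) : ℤ) - 1 = (j : ℤ) := by push_cast; ring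
    have c2 : ((j + 1 : ℕ) : ℤ) = (j : ℤ) + 1 := by push_cast; ring
    have c3 : ((j + 1 : ℕ) : ℤ) + 1 = (j : ℤ) + 2 := by push_cast; ring
    rw [c3, c1, c2]
    refine ⟨h2, by linarith, by nlinarith, ?_⟩
    have : f ((j : ℤ)) * f ((j : ℤ) + 2) - f ((j : ℤ) + 1) ^ 2
        = -(f ((j : ℤ) - 1) * f ((j : ℤ) + 1) - f j ^ 2) := by
      linear_combination (f (j : ℤ)) * e2 - (f ((j : ℤ) + 1)) * e1
    rw [this, h4, pow_succ]
    ring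

/-- For `m ≥ 2`, `n ≥ 1`, and `k ≥ (-1)^{n-1} f_{n-2}(m) + 1`, the root
`α = (√(s²-4t) - s)/2` satisfies `0 < 2α < 1`. -/
theorem two_alpha_lt_one (m : ℤ) (hm : 2 ≤ m) (f : ℤ → ℤ)
    (hf0 : f 0 = 0) (hf1 : f 1 = 1)
    (hrec : ∀ h : ℤ, f (h + 2) = m * f (h + 1) + f h)
    (n : ℤ) (hn : 1 ≤ n) (k s t : ℤ)
    (hk : (-1) ^ (n - 1).toNat * f (n - 2) + 1 ≤ k)
    (hs : s = (-1) ^ n.toNat * f n * f (n - 1) + k * f (n + 1))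
    (ht : t = (-1) ^ (n - 1).toNat * f (n - 1) ^ 2 - k * f n)
    (α : ℝ) (hα : α = (Real.sqrt ((s : ℝ) ^ 2 - 4 * (t : ℝ)) - (s : ℝ)) / 2) :
    0 < 2 * α ∧ 2 * α < 1 := by
  -- Set up indices: n = N + 1 with N : ℕ
  obtain ⟨N, hN⟩ : ∃ N : ℕ, n = (N : ℤ) + 1 := ⟨(n - 1).toNat, by omega⟩
  obtain ⟨ha0, hb0, hc1, hcat⟩ := fib_facts m hm f hf0 hf1 hrec N
  set a := f ((N : ℤ) - 1) with ha
  set b := f (N : ℤ) with hb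
  set c := f ((N : ℤ) + 1) with hc
  set d := f ((N : ℤ) + 2) with hd
  have hdrec : d = m * c + b := hrec N
  have hcrec : c = m * b + a := by
    have := hrec ((N : ℤ) - 1)
    have e : (N : ℤ) - 1 + 2 = (N : ℤ) + 1 := by ring
    have e' : (N : ℤ) - 1 + 1 = (N : ℤ) := by ring
    rwa [e, e'] at this
  set ε : ℤ := (-1) ^ N with hεdef
  have hε2 : ε * ε = 1 := by
    rcases Nat.even_or_odd N with h | h
    · simp [hεdef, h.neg_one_pow]
    · simp [hεdef, h.neg_one_pow]
  -- rewrite hypotheses in terms of a b c d ε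
  have hNn1 : (n - 1).toNat = N := by omega
  have hNn : n.toNat = N + 1 := by omega
  have hεn : ((-1 : ℤ)) ^ n.toNat = -ε := by rw [hNn, pow_succ]; ring
  have en2 : n - 2 = (N : ℤ) - 1 := by omega
  have en1 : n - 1 = (N : ℤ) := by omega
  have en0 : n = (N : ℤ) + 1 := hN
  have enp : n + 1 = (N : ℤ) + 2 := by omega
  rw [hNn1, en2, ← hεdef, ← ha] at hk
  rw [hεn, enp, en1, en0] at hs
  rw [← hc, ← hb, ← hd] at hs
  rw [hNn1, en1, en0, ← hεdef, ← hb, ← hc] at ht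
  -- hk : ε * a + 1 ≤ k ; hs : s = -ε * c * b + k * d ; ht : t = ε * b^2 - k * c
  have hεcat : ε * (a * c) - ε * b ^ 2 = 1 := by
    have : ε * (a * c - b ^ 2) = ε * ε := by rw [hcat]
    linarith [this]
  have had : ε * (a * d) - ε * (b * c) = m := by
    linear_combination (ε * a) * hdrec - (ε * b) * hcrec + m * hεcat
  -- key integer inequalities
  have htneg : t ≤ -2 := by
    have h1 : 0 ≤ (k - (ε * a + 1)) * c := by
      apply mul_nonneg <;> linarith
    nlinarith [h1, hεcat]
  have hkey : 0 < 2 * s + 4 * t + 1 := by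
    have hd2c : 0 ≤ d - 2 * c := by
      have : d - 2 * c = (m - 2) * c + b := by linarith [hdrec]
      rw [this]
      have : 0 ≤ (m - 2) * c := mul_nonneg (by linarith) (by linarith)
      linarith
    have h2 : 0 ≤ (k - (ε * a + 1)) * (d - 2 * c) := by
      apply mul_nonneg <;> linarith
    nlinarith [h2, had, hεcat]
  have hs2 : 2 ≤ s := by linarith
  -- real part
  have hsR : (0 : ℝ) ≤ (s : ℝ) := by exact_mod_cast (by linarith : (0 : ℤ) ≤ s)
  have htR : (t : ℝ) ≤ -2 := by exact_mod_cast htneg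
  have hkeyR : (0 : ℝ) < 2 * (s : ℝ) + 4 * (t : ℝ) + 1 := by
    exact_mod_cast hkey
  constructor
  · rw [hα]
    have : (s : ℝ) < Real.sqrt ((s : ℝ) ^ 2 - 4 * (t : ℝ)) := by
      rw [Real.lt_sqrt hsR]
      linarith only [htR]
    linarith only [this]
  · rw [hα]
    have : Real.sqrt ((s : ℝ) ^ 2 - 4 * (t : ℝ)) < (s : ℝ) + 1 := by
      rw [Real.sqrt_lt' (by linarith : (0 : ℝ) < (s : ℝ) + 1)]
      have e : ((s : ℝ) + 1) ^ 2 = (s : ℝ) ^ 2 + 2 * (s : ℝ) + 1 := by ring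
      rw [e]
      linarith only [hkeyR]
    linarith only [this]
end

section
/- Fix integers m ≥ 1, n ≥ 1 even, and k with s := f_{n+1}(m) k + f_n(m) f_{n-1}(m) > 0. Let t := -f_{n-1}(m)² - k f_n(m), D := s² - 4t, and T := f_{n+1}(m) s + 2 f_n(m). Then T² - D f_{n+1}(m)² = -4, i.e., (T, f_{n+1}(m)) is a solution of X² - D Y² = -4; equivalently D = (T² + 4) / f_{n+1}(m)². -/
lemma cassini (m : ℤ) (f : ℕ → ℤ) (hf0 : f 0 = 0) (hf1 : f 1 = 1)
    (hrec : ∀ h, f (h + 2) = m * f (h + 1) + f h) :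
    ∀ n, f n * f (n + 2) - f (n + 1) ^ 2 = (-1) ^ (n + 1) := by
  intro n
  induction n with
  | zero => simp [hf0, hf1, hrec 0]
  | succ n ih =>
    have h1 := hrec n
    have h2 := hrec (n + 1)
    have : f (n+1) * f (n+3) - f (n+2)^2 = -(f n * f (n+2) - f (n+1)^2) := by
      rw [show n+3 = (n+1)+2 from rfl, h2, h1]; ring
    rw [this, ih]; ring

/-- For `n` even, with `s = f_{n+1} k + f_n f_{n-1} > 0`, `t = -f_{n-1}² - k f_n`,
`D = s² - 4t` and `T = f_{n+1} s + 2 f_n`, one has `T² - D f_{n+1}² = -4`. -/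
theorem pell_neg4_solution (m : ℤ) (hm : 1 ≤ m) (f : ℕ → ℤ)
    (hf0 : f 0 = 0) (hf1 : f 1 = 1)
    (hrec : ∀ h, f (h + 2) = m * f (h + 1) + f h)
    (n : ℕ) (hn : 1 ≤ n) (hneven : Even n)
    (k s t D T : ℤ)
    (hs : s = f (n + 1) * k + f n * f (n - 1)) (hspos : 0 < s)
    (ht : t = -(f (n - 1)) ^ 2 - k * f n)
    (hD : D = s ^ 2 - 4 * t)
    (hT : T = f (n + 1) * s + 2 * f n) :
    T ^ 2 - D * f (n + 1) ^ 2 = -4 := by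
  have hc := cassini m f hf0 hf1 hrec (n - 1)
  have hn1 : n - 1 + 1 = n := Nat.succ_pred_eq_of_pos hn
  have hn2 : n - 1 + 2 = n + 1 := by omega
  rw [hn1, hn2] at hc
  have hsign : ((-1 : ℤ)) ^ n = 1 := hneven.neg_one_pow
  rw [hsign] at hc
  subst hT hD ht hs
  nlinarith [hc]
end
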